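/- arXiv:2503.14100 — 2 statements merged into one kernel-verified Lean document; each statement's English description precedes it below -/
import Mathlib

section
/- Define S(ε) = ln(1 + A₁ε/(B₁ε + cσ)) − ln(1 + A₂Nε/(B₂Nε + cV(1−ε) + cNσ)) for ε ∈ (0,1], where A₁, A₂, B₂, V, c, N, σ > 0 and B₁ = 0. Then S′(ε) = 0 has at most two real roots in ε, given (up to the approximation B₂ ≪ A₂) by ε = (−cV ± √(A₂N·cV))/(A₂N − cV); in particular, if A₂N > cV then exactly one of these roots is positive. -/
theorem power_allocation_stationarity
    (A₁ A₂ B₁ B₂ V c N σ : ℝ)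
    (hA₁ : 0 < A₁) (hA₂ : 0 < A₂) (hB₂ : 0 < B₂) (hV : 0 < V)
    (hc : 0 < c) (hN : 0 < N) (hσ : 0 < σ) (hB₁ : B₁ = 0)
    (S : ℝ → ℝ)
    (hS : S = fun ε : ℝ =>
      Real.log (1 + A₁ * ε / (B₁ * ε + c * σ)) -
        Real.log (1 + A₂ * N * ε / (B₂ * N * ε + c * V * (1 - ε) + c * N * σ)))
    (εp εm : ℝ)
    (hεp : εp = (-(c * V) + Real.sqrt (A₂ * N * (c * V))) / (A₂ * N - c * V))
    (hεm : εm = (-(c * V) - Real.sqrt (A₂ * N * (c * V))) / (A₂ * N - c * V)) :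
    ({ε : ℝ | ε ∈ Set.Ioc (0 : ℝ) 1 ∧ deriv S ε = 0}).ncard ≤ 2 ∧
      (A₂ * N > c * V → (0 < εp ∧ εm < 0)) := by
  subst hB₁
  have hcσ : (0:ℝ) < c * σ := by positivity
  set α : ℝ := B₂ * N - c * V with hα
  set β : ℝ := c * V + c * N * σ with hβ
  have hβpos : 0 < β := by rw [hβ]; positivity
  have hS' : S = fun ε : ℝ =>
      Real.log (1 + A₁ * ε / (c * σ)) -
        Real.log (1 + A₂ * N * ε / (α * ε + β)) := by
    funext ε
    simp only [hS]
    have h1 : (0:ℝ) * ε + c * σ = c * σ := by ring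
    have h2 : B₂ * N * ε + c * V * (1 - ε) + c * N * σ = α * ε + β := by
      rw [hα, hβ]; ring
    rw [h1, h2]
  set p : Polynomial ℝ :=
    Polynomial.C (A₁ * α * (α + A₂ * N)) * Polynomial.X ^ 2 +
      Polynomial.C (2 * A₁ * α * β) * Polynomial.X +
      Polynomial.C (β * (A₁ * β - A₂ * N * (c * σ))) with hp
  have hpeval : ∀ x : ℝ, p.eval x =
      A₁ * α * (α + A₂ * N) * x ^ 2 + 2 * A₁ * α * β * x +
        β * (A₁ * β - A₂ * N * (c * σ)) := by
    intro x; simp [hp]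
  have hkey : ∀ ε ∈ Set.Ioc (0:ℝ) 1, (deriv S ε = 0 ↔ p.eval ε = 0) := by
    rintro ε ⟨hε0, hε1⟩
    have he : 0 < α * ε + β := by
      have h2 : α * ε + β = B₂ * N * ε + c * V * (1 - ε) + c * N * σ := by
        rw [hα, hβ]; ring
      rw [h2]
      have t1 : 0 < B₂ * N * ε := by positivity
      have t2 : 0 ≤ c * V * (1 - ε) := mul_nonneg (by positivity) (by linarith)
      have t3 : 0 < c * N * σ := by positivity
      linarith
    have hg₁ : 0 < 1 + A₁ * ε / (c * σ) := by
      have : 0 < A₁ * ε / (c * σ) := div_pos (by positivity) hcσ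
      linarith
    have hg₂ : 0 < 1 + A₂ * N * ε / (α * ε + β) := by
      have : 0 < A₂ * N * ε / (α * ε + β) := div_pos (by positivity) he
      linarith
    have hd1 : HasDerivAt (fun x : ℝ => 1 + A₁ * x / (c * σ)) (A₁ / (c * σ)) ε := by
      have h := ((hasDerivAt_id ε).const_mul A₁).div_const (c * σ)
      simpa using h.const_add 1
    have hd2 : HasDerivAt (fun x : ℝ => 1 + A₂ * N * x / (α * x + β))
        ((A₂ * N * (α * ε + β) - A₂ * N * ε * α) / (α * ε + β) ^ 2) ε := by
      have hnum : HasDerivAt (fun x : ℝ => A₂ * N * x) (A₂ * N) ε := by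
        simpa using (hasDerivAt_id ε).const_mul (A₂ * N)
      have hden : HasDerivAt (fun x : ℝ => α * x + β) α ε := by
        simpa using ((hasDerivAt_id ε).const_mul α).add_const β
      have h := hnum.div hden he.ne'
      simpa using h.const_add 1
    have hderiv : HasDerivAt S
        (A₁ / (c * σ) / (1 + A₁ * ε / (c * σ)) -
          (A₂ * N * (α * ε + β) - A₂ * N * ε * α) / (α * ε + β) ^ 2 /
            (1 + A₂ * N * ε / (α * ε + β))) ε := by
      rw [hS']
      exact (hd1.log hg₁.ne').sub (hd2.log hg₂.ne')
    have hD := hderiv.deriv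
    have hMpos : 0 < (c * σ + A₁ * ε) * ((α * ε + β) * (α * ε + β + A₂ * N * ε)) := by
      have t1 : 0 < c * σ + A₁ * ε := by
        have : 0 < A₁ * ε := by positivity
        linarith
      have t2 : 0 < α * ε + β + A₂ * N * ε := by
        have : 0 < A₂ * N * ε := by positivity
        linarith
      positivity
    have hexpr : A₁ / (c * σ) / (1 + A₁ * ε / (c * σ)) -
          (A₂ * N * (α * ε + β) - A₂ * N * ε * α) / (α * ε + β) ^ 2 /
            (1 + A₂ * N * ε / (α * ε + β)) =
        (A₁ * α * (α + A₂ * N) * ε ^ 2 + 2 * A₁ * α * β * ε +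
          β * (A₁ * β - A₂ * N * (c * σ))) /
          ((c * σ + A₁ * ε) * ((α * ε + β) * (α * ε + β + A₂ * N * ε))) := by
      have t1 : c * σ + A₁ * ε ≠ 0 := by
        have : 0 < A₁ * ε := by positivity
        linarith
      have t2 : α * ε + β + A₂ * N * ε ≠ 0 := by
        have : 0 < A₂ * N * ε := by positivity
        linarith
      have e1 : 1 + A₁ * ε / (c * σ) = (c * σ + A₁ * ε) / (c * σ) := by
        rw [add_div, div_self hcσ.ne']
      have e2 : 1 + A₂ * N * ε / (α * ε + β) = (α * ε + β + A₂ * N * ε) / (α * ε + β) := by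
        rw [add_div, div_self he.ne']
      have f2 : (A₂ * N * (α * ε + β) - A₂ * N * ε * α) / (α * ε + β) ^ 2 /
          ((α * ε + β + A₂ * N * ε) / (α * ε + β)) =
          (A₂ * N * (α * ε + β) - A₂ * N * ε * α) / ((α * ε + β) * (α * ε + β + A₂ * N * ε)) := by
        have := he.ne'
        field_simp
      rw [e1, e2, div_div_div_cancel_right₀ hcσ.ne', f2,
        div_sub_div _ _ t1 (mul_ne_zero he.ne' t2)]
      congr 1
      ring
    rw [hD, hexpr, hpeval, div_eq_zero_iff]
    constructor
    · rintro (h | h)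
      · exact h
      · exact absurd h hMpos.ne'
    · intro h; exact Or.inl h
  have hset : {ε : ℝ | ε ∈ Set.Ioc (0:ℝ) 1 ∧ deriv S ε = 0} =
      {ε : ℝ | ε ∈ Set.Ioc (0:ℝ) 1 ∧ p.eval ε = 0} := by
    ext x
    simp only [Set.mem_setOf_eq]
    exact and_congr_right fun hx => hkey x hx
  constructor
  · rw [hset]
    by_cases hp0 : p = 0
    · have h01 : {ε : ℝ | ε ∈ Set.Ioc (0:ℝ) 1 ∧ p.eval ε = 0} = Set.Ioc 0 1 := by
        ext x; simp [hp0]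
      rw [h01]
      have hinf : (Set.Ioc (0:ℝ) 1).Infinite := Set.Ioc_infinite (by norm_num)
      rw [hinf.ncard]
      norm_num
    · have hsub : {ε : ℝ | ε ∈ Set.Ioc (0:ℝ) 1 ∧ p.eval ε = 0} ⊆
          (p.roots.toFinset : Set ℝ) := by
        intro x hx
        simp only [Finset.coe_sort_coe, Multiset.mem_toFinset, Finset.mem_coe,
          Polynomial.mem_roots, hp0, ne_eq, not_false_eq_true, true_and]
        exact hx.2
      calc {ε : ℝ | ε ∈ Set.Ioc (0:ℝ) 1 ∧ p.eval ε = 0}.ncard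
          ≤ (p.roots.toFinset : Set ℝ).ncard :=
            Set.ncard_le_ncard hsub (p.roots.toFinset.finite_toSet)
        _ = p.roots.toFinset.card := Set.ncard_coe_finset _
        _ ≤ Multiset.card p.roots := Multiset.toFinset_card_le _
        _ ≤ p.natDegree := Polynomial.card_roots' p
        _ ≤ 2 := by
            rw [hp]
            apply Polynomial.natDegree_quadratic_le
  · intro h
    have hD : 0 < A₂ * N - c * V := by linarith
    have hs : c * V < Real.sqrt (A₂ * N * (c * V)) := by
      have hq : Real.sqrt (A₂ * N * (c * V)) ^ 2 = A₂ * N * (c * V) :=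
        Real.sq_sqrt (by positivity)
      nlinarith [Real.sqrt_nonneg (A₂ * N * (c * V)), mul_pos hc hV, hq]
    constructor
    · rw [hεp]
      exact div_pos (by linarith) hD
    · rw [hεm]
      apply div_neg_of_neg_of_pos _ hD
      have := Real.sqrt_nonneg (A₂ * N * (c * V))
      nlinarith [mul_pos hc hV]
end

section
/- Define h(ε) = A₂N(σ²N + PV)/((σ²KN + B₂NPε + KPV(1−ε))(σ²KN + (A₂+B₂)NPε + KPV(1−ε))) on [0,1], with all constants A₂, B₂, N, K, P, V, σ > 0 and with both denominator factors positive on [0,1]. If (A₂+B₂)NP > KPV and B₂NP > KPV, then h is strictly decreasing on [0,1]; if both inequalities are reversed, h is strictly increasing on [0,1]. -/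
theorem second_derivative_term_monotonicity
    (A₂ B₂ N K P V σ : ℝ)
    (hA₂ : 0 < A₂) (hB₂ : 0 < B₂) (hN : 0 < N) (hK : 0 < K) (hP : 0 < P)
    (hV : 0 < V) (hσ : 0 < σ)
    (hden : ∀ ε ∈ Set.Icc (0 : ℝ) 1,
      0 < σ ^ 2 * K * N + B₂ * N * P * ε + K * P * V * (1 - ε) ∧
      0 < σ ^ 2 * K * N + (A₂ + B₂) * N * P * ε + K * P * V * (1 - ε)) :
    ((A₂ + B₂) * N * P > K * P * V → B₂ * N * P > K * P * V →
      StrictAntiOn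
        (fun ε : ℝ => A₂ * N * (σ ^ 2 * N + P * V) /
          ((σ ^ 2 * K * N + B₂ * N * P * ε + K * P * V * (1 - ε)) *
            (σ ^ 2 * K * N + (A₂ + B₂) * N * P * ε + K * P * V * (1 - ε))))
        (Set.Icc (0 : ℝ) 1)) ∧
    ((A₂ + B₂) * N * P < K * P * V → B₂ * N * P < K * P * V →
      StrictMonoOn
        (fun ε : ℝ => A₂ * N * (σ ^ 2 * N + P * V) /
          ((σ ^ 2 * K * N + B₂ * N * P * ε + K * P * V * (1 - ε)) *
            (σ ^ 2 * K * N + (A₂ + B₂) * N * P * ε + K * P * V * (1 - ε))))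
        (Set.Icc (0 : ℝ) 1)) := by
  have hnum : 0 < A₂ * N * (σ ^ 2 * N + P * V) := by positivity
  constructor
  · intro h1 h2 x hx y hy hxy
    obtain ⟨hx1, hx2⟩ := hden x hx
    obtain ⟨hy1, hy2⟩ := hden y hy
    have hd1 : σ ^ 2 * K * N + B₂ * N * P * x + K * P * V * (1 - x) <
        σ ^ 2 * K * N + B₂ * N * P * y + K * P * V * (1 - y) := by nlinarith
    have hd2 : σ ^ 2 * K * N + (A₂ + B₂) * N * P * x + K * P * V * (1 - x) <
        σ ^ 2 * K * N + (A₂ + B₂) * N * P * y + K * P * V * (1 - y) := by nlinarith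
    exact div_lt_div_of_pos_left hnum (by positivity) (by nlinarith)
  · intro h1 h2 x hx y hy hxy
    obtain ⟨hx1, hx2⟩ := hden x hx
    obtain ⟨hy1, hy2⟩ := hden y hy
    have hd1 : σ ^ 2 * K * N + B₂ * N * P * y + K * P * V * (1 - y) <
        σ ^ 2 * K * N + B₂ * N * P * x + K * P * V * (1 - x) := by nlinarith
    have hd2 : σ ^ 2 * K * N + (A₂ + B₂) * N * P * y + K * P * V * (1 - y) <
        σ ^ 2 * K * N + (A₂ + B₂) * N * P * x + K * P * V * (1 - x) := by nlinarith
    exact div_lt_div_of_pos_left hnum (by positivity) (by nlinarith)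
end
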